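/- If p > q > 0, s_k ≤ n_k for every k, and Σ_{k=1}^K s_k ≥ 1, then there exists exactly one vector (T_1,…,T_K) ∈ ℝ^K satisfying the balance equations of the block-model Dirichlet problem for label 1. -/

import Mathlib

open Finset

/-- In the block model with `p > q > 0`, `s k ≤ n k` for every `k`,
`n k ≥ 1` for every `k`, and at least one seed (`∑ k, s k ≥ 1`), there exists
exactly one vector `(T₁, …, T_K)` satisfying the balance equations of the
Dirichlet problem for label 1 (block 1 indexed by `i1`). -/
theorem dirichlet_block_model_existence_uniqueness
    (K : ℕ) (n s : Fin K → ℕ)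
    (hn : ∀ k, 1 ≤ n k) (hs : ∀ k, s k ≤ n k)
    (hseed : 1 ≤ ∑ k, s k)
    (p q : ℝ) (hpq : p > q) (hq : q > 0)
    (i1 : Fin K)
    (N : ℕ) (hN : N = ∑ k, n k) :
    ∃! T : Fin K → ℝ,
      ∀ k, ((n k : ℝ) * (p - q) + (N : ℝ) * q) * T k
        = (if k = i1 then (s i1 : ℝ) * p else (s i1 : ℝ) * q)
          + ((n k : ℝ) - (s k : ℝ)) * p * T k
          + ∑ j ∈ univ.erase k, ((n j : ℝ) - (s j : ℝ)) * q * T j := by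
  classical
  set h : Fin K → ℝ := fun k => if k = i1 then (s i1 : ℝ) * p else (s i1 : ℝ) * q with hh
  set d : Fin K → ℝ := fun k => (s k : ℝ) * (p - q) + (N : ℝ) * q with hd
  -- N ≥ 1
  have hN1 : (1 : ℕ) ≤ N := by
    rw [hN]
    calc (1:ℕ) ≤ K := i1.pos
    _ = ∑ _k : Fin K, 1 := by simp
    _ ≤ ∑ k, n k := Finset.sum_le_sum fun k _ => hn k
  have hNR : (1 : ℝ) ≤ (N : ℝ) := by exact_mod_cast hN1
  -- d k > 0
  have hdpos : ∀ k, 0 < d k := by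
    intro k
    have h1 : (0:ℝ) ≤ (s k : ℝ) * (p - q) :=
      mul_nonneg (Nat.cast_nonneg _) (by linarith)
    simp only [hd]
    nlinarith
  have hdne : ∀ k, d k ≠ 0 := fun k => (hdpos k).ne'
  -- the fixed-point constants
  set m : ℝ := ∑ k, ((n k : ℝ) - (s k : ℝ)) * q / d k with hm
  set c : ℝ := ∑ k, ((n k : ℝ) - (s k : ℝ)) * q * h k / d k with hc
  -- m < 1
  have hns : ∀ k, (0:ℝ) ≤ (n k : ℝ) - (s k : ℝ) := by
    intro k
    have := hs k
    have : (s k : ℝ) ≤ (n k : ℝ) := by exact_mod_cast this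
    linarith
  have hmlt : m < 1 := by
    have hstep : ∀ k ∈ (univ : Finset (Fin K)),
        ((n k : ℝ) - (s k : ℝ)) * q / d k ≤ ((n k : ℝ) - (s k : ℝ)) / (N : ℝ) := by
      intro k _
      rw [div_le_div_iff₀ (hdpos k) (by linarith : (0:ℝ) < (N:ℝ))]
      have h1 := hns k
      have hs0 : (0:ℝ) ≤ (s k : ℝ) := Nat.cast_nonneg _
      have h3 : (0:ℝ) ≤ ((n k : ℝ) - (s k : ℝ)) * ((s k : ℝ) * (p - q)) :=
        mul_nonneg h1 (mul_nonneg hs0 (by linarith))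
      simp only [hd]
      nlinarith [h3]
    have h1 : m ≤ ∑ k, ((n k : ℝ) - (s k : ℝ)) / (N : ℝ) := Finset.sum_le_sum hstep
    have h2 : ∑ k, ((n k : ℝ) - (s k : ℝ)) / (N : ℝ)
        = ((N : ℝ) - (∑ k, (s k : ℝ))) / (N : ℝ) := by
      rw [← Finset.sum_div, Finset.sum_sub_distrib]
      congr 2
      rw [hN]; push_cast; ring
    have hS : (1 : ℝ) ≤ ∑ k, (s k : ℝ) := by
      have : ((1:ℕ):ℝ) ≤ ((∑ k, s k : ℕ) : ℝ) := by exact_mod_cast hseed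
      simpa [Nat.cast_sum] using this
    have h3 : ((N : ℝ) - (∑ k, (s k : ℝ))) / (N : ℝ) < 1 := by
      rw [div_lt_one (by linarith : (0:ℝ) < (N:ℝ))]
      linarith
    linarith
  have h1m : (1 : ℝ) - m ≠ 0 := by linarith
  set a : ℝ := c / (1 - m) with ha
  have hac : c + a * m = a := by
    have hmul : a * (1 - m) = c := div_mul_cancel₀ c h1m
    linear_combination -hmul
  set T0 : Fin K → ℝ := fun k => (h k + a) / d k with hT0
  -- key equivalence
  have key : ∀ (T : Fin K → ℝ) (k : Fin K),
      (((n k : ℝ) * (p - q) + (N : ℝ) * q) * T k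
        = h k + ((n k : ℝ) - (s k : ℝ)) * p * T k
          + ∑ j ∈ univ.erase k, ((n j : ℝ) - (s j : ℝ)) * q * T j)
      ↔ d k * T k = h k + ∑ j, ((n j : ℝ) - (s j : ℝ)) * q * T j := by
    intro T k
    rw [Finset.sum_erase_eq_sub (Finset.mem_univ k)]
    constructor <;> intro hE <;> [skip; skip] <;> linear_combination hE
  -- the sum identity: any T with T k = (h k + x)/d k has Σ = c + x*m
  have sumid : ∀ x : ℝ,
      ∑ j, ((n j : ℝ) - (s j : ℝ)) * q * ((h j + x) / d j) = c + x * m := by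
    intro x
    have : ∀ j ∈ (univ : Finset (Fin K)),
        ((n j : ℝ) - (s j : ℝ)) * q * ((h j + x) / d j)
        = ((n j : ℝ) - (s j : ℝ)) * q * h j / d j
          + x * (((n j : ℝ) - (s j : ℝ)) * q / d j) := by
      intro j _
      field_simp
    rw [Finset.sum_congr rfl this, Finset.sum_add_distrib, ← Finset.mul_sum]
  -- if T satisfies the reduced system then T = T0
  have uniq : ∀ T : Fin K → ℝ,
      (∀ k, d k * T k = h k + ∑ j, ((n j : ℝ) - (s j : ℝ)) * q * T j) → T = T0 := by
    intro T hT
    set x : ℝ := ∑ j, ((n j : ℝ) - (s j : ℝ)) * q * T j with hx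
    have hTk : ∀ k, T k = (h k + x) / d k := by
      intro k
      rw [eq_div_iff (hdne k)]
      linarith [hT k]
    have hxa : x = a := by
      have hfix : x = c + x * m := by
        calc x = ∑ j, ((n j : ℝ) - (s j : ℝ)) * q * T j := hx
          _ = ∑ j, ((n j : ℝ) - (s j : ℝ)) * q * ((h j + x) / d j) :=
            Finset.sum_congr rfl (fun j _ => by rw [hTk j])
          _ = c + x * m := sumid x
      rw [ha, eq_div_iff h1m]
      linear_combination hfix
    funext k
    rw [hTk k, hxa]
  refine ⟨T0, ?_, ?_⟩
  · intro k
    rw [key T0 k]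
    have hS : ∑ j, ((n j : ℝ) - (s j : ℝ)) * q * T0 j = a := by
      have := sumid a
      calc ∑ j, ((n j : ℝ) - (s j : ℝ)) * q * T0 j
          = ∑ j, ((n j : ℝ) - (s j : ℝ)) * q * ((h j + a) / d j) := rfl
        _ = c + a * m := sumid a
        _ = a := hac
    rw [hS, hT0]
    field_simp [hdne k]
  · intro T hT
    exact uniq T (fun k => (key T k).mp (hT k))
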